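/- (Product construction.) Let u, v and g be positive integers such that g·u and g·v are even, u > g and v > g. If there exist an OF(u,g) and an OF(v,g), then there exists an OF(u·v, g). -/

import Mathlib

/-- The weight of a word of length `m` over `ℤ_q` (represented as `Fin q`):
the number of nonzero coordinates. -/
def wordWeight {m q : ℕ} (x : Fin m → Fin q) : ℕ :=
  (Finset.univ.filter (fun i => (x i : ℕ) ≠ 0)).card

/-- The set `H(m)` of all words of length `m` and weight `2` over `ℤ_{g+1}`. -/
def weightTwoWords (m g : ℕ) : Finset (Fin m → Fin (g + 1)) :=
  Finset.univ.filter (fun x => wordWeight x = 2)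

/-- A partition of `H(m)` (words of length `m`, weight `2` over `ℤ_{g+1}`) into
`k` subsets, each of cardinality `s`, with pairwise Hamming distance at least
`3` inside each subset. -/
def HasDist3Partition (m g k s : ℕ) : Prop :=
  ∃ P : Fin k → Finset (Fin m → Fin (g + 1)),
    (∀ i j, i ≠ j → Disjoint (P i) (P j)) ∧
    (Finset.univ.biUnion P = weightTwoWords m g) ∧
    (∀ i, (P i).card = s) ∧
    (∀ i, ∀ x ∈ P i, ∀ y ∈ P i, x ≠ y → 3 ≤ hammingDist x y)

/-- An `ODAR(m,g)`: a partition of `H(m)` into `g²` subsets, each of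
cardinality `C(m,2)` and with pairwise Hamming distance at least 3. -/
def IsODAR (m g : ℕ) : Prop :=
  HasDist3Partition m g (g ^ 2) (m.choose 2)

/-- An `OF(m,g)`: a partition of `H(m)` into `g(m-1)` subsets, each of
cardinality `g·m/2` and with pairwise Hamming distance at least 3. -/
def IsOF (m g : ℕ) : Prop :=
  HasDist3Partition m g (g * (m - 1)) (g * m / 2)

namespace OFProd

variable {g : ℕ}

def supp {m : ℕ} (x : Fin m → Fin (g+1)) : Finset (Fin m) :=
  Finset.univ.filter (fun i => x i ≠ 0)

lemma mem_supp {m : ℕ} {x : Fin m → Fin (g+1)} {i : Fin m} : i ∈ supp x ↔ x i ≠ 0 := by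
  simp [supp]

lemma wordWeight_eq {m : ℕ} (x : Fin m → Fin (g+1)) : wordWeight x = (supp x).card := by
  unfold wordWeight supp
  congr 1
  apply Finset.filter_congr
  intro i _
  rw [Ne, Ne, Fin.ext_iff, Fin.val_zero]

lemma mem_weightTwoWords {m : ℕ} {x : Fin m → Fin (g+1)} :
    x ∈ weightTwoWords m g ↔ (supp x).card = 2 := by
  simp [weightTwoWords, wordWeight_eq]

lemma hammingDist_eq {m : ℕ} (x y : Fin m → Fin (g+1)) :
    hammingDist x y = (Finset.univ.filter (fun i => x i ≠ y i)).card := rfl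

lemma exists_pair {m : ℕ} {x : Fin m → Fin (g+1)} (h : (supp x).card = 2) :
    ∃ i j : Fin m, i < j ∧ supp x = {i, j} := by
  obtain ⟨i, j, hij, hs⟩ := Finset.card_eq_two.mp h
  rcases lt_or_gt_of_ne hij with h' | h'
  · exact ⟨i, j, h', hs⟩
  · exact ⟨j, i, h', by rw [hs, Finset.pair_comm]⟩

lemma pair_eq {α : Type*} [DecidableEq α] {a b c d : α} (hab : a ≠ b)
    (h : ({a, b} : Finset α) = {c, d}) : (a = c ∧ b = d) ∨ (a = d ∧ b = c) := by
  have ha : a = c ∨ a = d := by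
    have : a ∈ ({c, d} : Finset α) := h ▸ (by simp : a ∈ ({a, b} : Finset α))
    simpa using this
  have hb : b = c ∨ b = d := by
    have : b ∈ ({c, d} : Finset α) := h ▸ (by simp : b ∈ ({a, b} : Finset α))
    simpa using this
  rcases ha with rfl | rfl
  · rcases hb with rfl | rfl
    · exact absurd rfl hab
    · exact Or.inl ⟨rfl, rfl⟩
  · rcases hb with rfl | rfl
    · exact Or.inr ⟨rfl, rfl⟩
    · exact absurd rfl hab

lemma dist3_iff {m : ℕ} {x y : Fin m → Fin (g+1)} (hx : (supp x).card = 2)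
    (hy : (supp y).card = 2) :
    3 ≤ hammingDist x y ↔ supp x ≠ supp y ∧ ∀ i, x i = y i → x i = 0 := by
  rw [hammingDist_eq]
  constructor
  · intro h3
    constructor
    · rintro hss
      have hsub : Finset.univ.filter (fun i => x i ≠ y i) ⊆ supp x ∪ supp y := by
        intro i hi
        simp only [Finset.mem_filter, Finset.mem_univ, true_and] at hi
        rcases eq_or_ne (x i) 0 with h0 | h0
        · exact Finset.mem_union_right _ (mem_supp.mpr (fun h => hi (h0.trans h.symm)))
        · exact Finset.mem_union_left _ (mem_supp.mpr h0)
      have := Finset.card_le_card hsub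
      rw [hss, Finset.union_self, hy] at this
      omega
    · intro i hxy
      by_contra h0
      have hi : i ∈ supp x ∩ supp y := by
        simp only [Finset.mem_inter, mem_supp]
        exact ⟨h0, fun h => h0 (hxy.trans h)⟩
      have hsub : Finset.univ.filter (fun i => x i ≠ y i) ⊆ (supp x ∪ supp y) \ {i} := by
        intro j hj
        simp only [Finset.mem_filter, Finset.mem_univ, true_and] at hj
        have hji : j ≠ i := fun h => hj (h ▸ hxy)
        simp only [Finset.mem_sdiff, Finset.mem_singleton, hji, not_false_iff, and_true]
        rcases eq_or_ne (x j) 0 with h0' | h0'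
        · exact Finset.mem_union_right _ (mem_supp.mpr (fun h => hj (h0'.trans h.symm)))
        · exact Finset.mem_union_left _ (mem_supp.mpr h0')
      have h1 := Finset.card_le_card hsub
      have h2 : ((supp x ∪ supp y) \ {i}).card ≤ (supp x ∪ supp y).card - 1 := by
        have : i ∈ supp x ∪ supp y := Finset.mem_union_left _ (Finset.mem_inter.mp hi).1
        rw [Finset.card_sdiff, Finset.singleton_inter_of_mem this, Finset.card_singleton]
      have h4 : (supp x ∪ supp y).card + (supp x ∩ supp y).card = 4 := by
        rw [Finset.card_union_add_card_inter, hx, hy]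
      have h5 : 1 ≤ (supp x ∩ supp y).card := Finset.card_pos.mpr ⟨i, hi⟩
      omega
  · rintro ⟨hss, hval⟩
    have hsub : supp x ∪ supp y ⊆ Finset.univ.filter (fun i => x i ≠ y i) := by
      intro i hi
      simp only [Finset.mem_filter, Finset.mem_univ, true_and]
      intro hxy
      rcases Finset.mem_union.mp hi with h | h
      · exact mem_supp.mp h (hval i hxy)
      · exact mem_supp.mp h (hxy ▸ hval i hxy)
    have hint : (supp x ∩ supp y).card ≤ 1 := by
      by_contra hc
      push_neg at hc
      have hsx : supp x ∩ supp y = supp x :=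
        Finset.eq_of_subset_of_card_le Finset.inter_subset_left (by omega)
      have hsy : supp x ∩ supp y = supp y :=
        Finset.eq_of_subset_of_card_le Finset.inter_subset_right (by omega)
      exact hss (hsx.symm.trans hsy)
    have h4 : (supp x ∪ supp y).card + (supp x ∩ supp y).card = 4 := by
      rw [Finset.card_union_add_card_inter, hx, hy]
    have := Finset.card_le_card hsub
    omega

lemma dist3_of_disjoint_supp {m : ℕ} {x y : Fin m → Fin (g+1)} (hx : (supp x).card = 2)
    (hy : (supp y).card = 2) (hd : Disjoint (supp x) (supp y)) : 3 ≤ hammingDist x y := by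
  rw [dist3_iff hx hy]
  constructor
  · intro hss
    have : (supp x).card = 0 := by
      have := hd
      rw [hss, Finset.disjoint_self_iff_empty] at this
      · rw [hss, this]; simp
    omega
  · intro i hxy
    by_contra h0
    have hix : i ∈ supp x := mem_supp.mpr h0
    have hiy : i ∈ supp y := mem_supp.mpr (fun h => h0 (hxy.trans h))
    exact Finset.disjoint_left.mp hd hix hiy

section ProdDef
variable {u v : ℕ} [NeZero u]

def embed (b : Fin v) (x : Fin u → Fin (g+1)) : Fin (u*v) → Fin (g+1) :=
  fun k => if (finProdFinEquiv.symm k).2 = b then x (finProdFinEquiv.symm k).1 else 0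

def lift (y : Fin v → Fin (g+1)) (a s : Fin u) : Fin (u*v) → Fin (g+1) :=
  fun k =>
    if (finProdFinEquiv.symm k).1 =
        a + (if ((supp y).filter (· < (finProdFinEquiv.symm k).2)).card = 0 then 0 else s)
      then y (finProdFinEquiv.symm k).2 else 0

lemma embed_apply (b : Fin v) (x : Fin u → Fin (g+1)) (p : Fin u) (c : Fin v) :
    embed b x (finProdFinEquiv (p, c)) = if c = b then x p else 0 := by
  simp [embed]

lemma pair_surj (k : Fin (u * v)) : ∃ (p : Fin u) (c : Fin v), finProdFinEquiv (p, c) = k :=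
  ⟨(finProdFinEquiv.symm k).1, (finProdFinEquiv.symm k).2, by
    rw [Prod.mk.eta, Equiv.apply_symm_apply]⟩

lemma supp_embed (b : Fin v) (x : Fin u → Fin (g+1)) :
    supp (embed b x) = (supp x).image (fun p => finProdFinEquiv (p, b)) := by
  ext k
  obtain ⟨p, c, rfl⟩ := pair_surj k
  rw [mem_supp, embed_apply]
  simp only [Finset.mem_image]
  constructor
  · intro h
    by_cases hc : c = b
    · subst hc
      exact ⟨p, mem_supp.mpr (by simpa using h), rfl⟩
    · simp [hc] at h
  · rintro ⟨q, hq, hqe⟩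
    obtain ⟨rfl, rfl⟩ : q = p ∧ b = c := by
      simpa [Prod.ext_iff] using finProdFinEquiv.injective hqe
    simp [mem_supp.mp hq]

lemma filter_lt_left {b1 b2 : Fin v} (h12 : b1 < b2) :
    ({b1, b2} : Finset (Fin v)).filter (· < b1) = ∅ := by
  ext x
  simp only [Finset.mem_filter, Finset.mem_insert, Finset.mem_singleton,
    Finset.notMem_empty, iff_false, not_and]
  rintro (rfl | rfl)
  · exact lt_irrefl _
  · exact fun h => absurd (h.trans h12) (lt_irrefl _)

lemma filter_lt_right {b1 b2 : Fin v} (h12 : b1 < b2) :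
    ({b1, b2} : Finset (Fin v)).filter (· < b2) = {b1} := by
  ext x
  simp only [Finset.mem_filter, Finset.mem_insert, Finset.mem_singleton]
  constructor
  · rintro ⟨rfl | rfl, h⟩
    · rfl
    · exact absurd h (lt_irrefl _)
  · rintro rfl
    exact ⟨Or.inl rfl, h12⟩

lemma lift_eval {y : Fin v → Fin (g+1)} {b1 b2 : Fin v} (h12 : b1 < b2)
    (hs : supp y = {b1, b2}) (a s p : Fin u) (b : Fin v) :
    lift y a s (finProdFinEquiv (p, b)) =
      if b = b1 ∧ p = a then y b1 else if b = b2 ∧ p = a + s then y b2 else 0 := by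
  have hne : b1 ≠ b2 := ne_of_lt h12
  simp only [lift, Equiv.symm_apply_apply, hs]
  by_cases hb1 : b = b1
  · subst hb1
    rw [filter_lt_left h12]
    by_cases hp : p = a <;> simp [hp, hne]
  · by_cases hb2 : b = b2
    · subst hb2
      rw [filter_lt_right h12]
      simp only [Finset.card_singleton, one_ne_zero, if_false, hb1, false_and, if_false]
      by_cases hp : p = a + s <;> simp [hp]
    · have hy : y b = 0 := by
        by_contra h
        have : b ∈ supp y := mem_supp.mpr h
        rw [hs] at this
        simp only [Finset.mem_insert, Finset.mem_singleton] at this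
        tauto
      simp [hb1, hb2, hy]

lemma supp_lift {y : Fin v → Fin (g+1)} {b1 b2 : Fin v} (h12 : b1 < b2)
    (hs : supp y = {b1, b2}) (a s : Fin u) :
    supp (lift y a s) = {finProdFinEquiv (a, b1), finProdFinEquiv (a + s, b2)} := by
  have hy1 : y b1 ≠ 0 := mem_supp.mp (by rw [hs]; simp)
  have hy2 : y b2 ≠ 0 := mem_supp.mp (by rw [hs]; simp)
  have hne : b1 ≠ b2 := ne_of_lt h12
  ext k
  obtain ⟨p, b, rfl⟩ := pair_surj k
  rw [mem_supp, lift_eval h12 hs]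
  simp only [Finset.mem_insert, Finset.mem_singleton, EmbeddingLike.apply_eq_iff_eq,
    Prod.mk.injEq]
  by_cases hb1 : b = b1
  · subst hb1
    by_cases hp : p = a <;> simp [hp, hy1, hne, Ne.symm hne]
  · by_cases hb2 : b = b2
    · subst hb2
      by_cases hp : p = a + s <;> simp [hp, hy2, hb1, Ne.symm hne]
    · simp [hb1, hb2]

lemma card_supp_embed {b : Fin v} {x : Fin u → Fin (g+1)} (hx : (supp x).card = 2) :
    (supp (embed b x)).card = 2 := by
  rw [supp_embed, Finset.card_image_of_injective _ (fun p q h => by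
    simpa [Prod.ext_iff] using finProdFinEquiv.injective h), hx]

lemma card_supp_lift {y : Fin v → Fin (g+1)} {b1 b2 : Fin v} (h12 : b1 < b2)
    (hs : supp y = {b1, b2}) (a s : Fin u) : (supp (lift y a s)).card = 2 := by
  rw [supp_lift h12 hs]
  rw [Finset.card_insert_of_notMem, Finset.card_singleton]
  simp only [Finset.mem_singleton, EmbeddingLike.apply_eq_iff_eq, Prod.mk.injEq, not_and]
  exact fun _ h => (ne_of_lt h12) h

end ProdDef

section Parts
variable {u v : ℕ} [NeZero u]

def Apart (P : Finset (Fin u → Fin (g+1))) : Finset (Fin (u*v) → Fin (g+1)) :=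
  Finset.univ.biUnion fun b : Fin v => P.image (embed b)

def Bpart (Q : Finset (Fin v → Fin (g+1))) (s : Fin u) : Finset (Fin (u*v) → Fin (g+1)) :=
  (Q ×ˢ Finset.univ).image fun z => lift z.1 z.2 s

lemma mem_Apart {P : Finset (Fin u → Fin (g+1))} {w : Fin (u*v) → Fin (g+1)} :
    w ∈ Apart (v := v) P ↔ ∃ b x, x ∈ P ∧ w = embed b x := by
  simp only [Apart, Finset.mem_biUnion, Finset.mem_image, Finset.mem_univ, true_and]
  constructor
  · rintro ⟨b, x, hx, rfl⟩; exact ⟨b, x, hx, rfl⟩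
  · rintro ⟨b, x, hx, rfl⟩; exact ⟨b, x, hx, rfl⟩

lemma mem_Bpart {Q : Finset (Fin v → Fin (g+1))} {s : Fin u} {w : Fin (u*v) → Fin (g+1)} :
    w ∈ Bpart Q s ↔ ∃ y a, y ∈ Q ∧ w = lift y a s := by
  simp only [Bpart, Finset.mem_image, Finset.mem_product, Finset.mem_univ, and_true,
    Prod.exists]
  constructor
  · rintro ⟨y, a, hy, rfl⟩; exact ⟨y, a, hy, rfl⟩
  · rintro ⟨y, a, hy, rfl⟩; exact ⟨y, a, hy, rfl⟩

lemma embed_injective (b : Fin v) : Function.Injective (embed (g := g) (u := u) b) := by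
  intro x x' h
  funext p
  have := congrFun h (finProdFinEquiv (p, b))
  simpa [embed_apply] using this

lemma embed_inj {b b' : Fin v} {x x' : Fin u → Fin (g+1)} (hx : (supp x).card = 2)
    (h : embed b x = embed b' x') : b = b' ∧ x = x' := by
  obtain ⟨q, hq⟩ := Finset.card_pos.mp (by omega : 0 < (supp x).card)
  have h1 := congrFun h (finProdFinEquiv (q, b))
  rw [embed_apply, embed_apply, if_pos rfl] at h1
  have hbb : b = b' := by
    by_contra hne
    rw [if_neg hne] at h1
    exact mem_supp.mp hq h1
  exact ⟨hbb, embed_injective b (hbb ▸ h)⟩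

lemma lift_inj {y y' : Fin v → Fin (g+1)} {b1 b2 b1' b2' : Fin v} (h12 : b1 < b2)
    (hs : supp y = {b1, b2}) (h12' : b1' < b2') (hs' : supp y' = {b1', b2'})
    {a a' s s' : Fin u} (h : lift y a s = lift y' a' s') : y = y' ∧ a = a' ∧ s = s' := by
  have hsupp : ({finProdFinEquiv (a, b1), finProdFinEquiv (a + s, b2)} :
      Finset (Fin (u*v))) = {finProdFinEquiv (a', b1'), finProdFinEquiv (a' + s', b2')} := by
    rw [← supp_lift h12 hs a s, ← supp_lift h12' hs' a' s', h]
  have hpairne : finProdFinEquiv (a, b1) ≠ finProdFinEquiv (a + s, b2) := by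
    intro he
    have h' := finProdFinEquiv.injective he
    rw [Prod.ext_iff] at h'
    exact (ne_of_lt h12) h'.2
  rcases pair_eq hpairne hsupp with ⟨h1, h2⟩ | ⟨h1, h2⟩
  · obtain ⟨ha, hb1⟩ : a = a' ∧ b1 = b1' := by
      simpa [Prod.ext_iff] using finProdFinEquiv.injective h1
    obtain ⟨has, hb2⟩ : a + s = a' + s' ∧ b2 = b2' := by
      simpa [Prod.ext_iff] using finProdFinEquiv.injective h2
    rw [← hb1, ← hb2] at hs' h12'
    have hss : s = s' := by
      apply add_left_cancel (a := a)
      rw [has, ha]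
    refine ⟨?_, ha, hss⟩
    funext b
    by_cases hb : b = b1
    · rw [hb]
      have hev := congrFun h (finProdFinEquiv (a, b1))
      rw [lift_eval h12 hs, lift_eval h12' hs'] at hev
      simpa [← ha] using hev
    · by_cases hb2 : b = b2
      · rw [hb2]
        have hev := congrFun h (finProdFinEquiv (a + s, b2))
        rw [lift_eval h12 hs, lift_eval h12' hs'] at hev
        have hne21 : b2 ≠ b1 := (ne_of_lt h12).symm
        simpa [hne21, ← has] using hev
      · have hy0 : y b = 0 := by
          by_contra h0
          have := mem_supp.mpr h0; rw [hs] at this; simp at this; tauto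
        have hy0' : y' b = 0 := by
          by_contra h0
          have := mem_supp.mpr h0; rw [hs'] at this; simp at this; tauto
        rw [hy0, hy0']
  · obtain ⟨-, hb1⟩ : a = a' + s' ∧ b1 = b2' := by
      simpa [Prod.ext_iff] using finProdFinEquiv.injective h1
    obtain ⟨-, hb2⟩ : a + s = a' ∧ b2 = b1' := by
      simpa [Prod.ext_iff] using finProdFinEquiv.injective h2
    have hlt : b1 < b2' := h12.trans (hb2 ▸ h12')
    rw [hb1] at hlt
    exact absurd hlt (lt_irrefl _)
lemma card_Apart {P : Finset (Fin u → Fin (g+1))} (hP2 : ∀ x ∈ P, (supp x).card = 2) :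
    (Apart (v := v) P).card = v * P.card := by
  rw [Apart, Finset.card_biUnion]
  · rw [Finset.sum_congr rfl (fun b _ => Finset.card_image_of_injective P (embed_injective b))]
    simp [Finset.sum_const, Finset.card_univ]
  · intro b _ b' _ hbb
    rw [Function.onFun, Finset.disjoint_left]
    rintro w hw hw'
    obtain ⟨x, hx, rfl⟩ := Finset.mem_image.mp hw
    obtain ⟨x', hx', he⟩ := Finset.mem_image.mp hw'
    exact hbb (embed_inj (hP2 x' hx') he).1.symm

lemma card_Bpart {Q : Finset (Fin v → Fin (g+1))} (hQ2 : ∀ y ∈ Q, (supp y).card = 2)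
    (s : Fin u) : (Bpart Q s).card = Q.card * u := by
  rw [Bpart, Finset.card_image_of_injOn, Finset.card_product, Finset.card_univ,
    Fintype.card_fin]
  rintro ⟨y, a⟩ hz ⟨y', a'⟩ hz' he
  have hzy := (Finset.mem_product.mp hz).1
  have hzy' := (Finset.mem_product.mp hz').1
  obtain ⟨b1, b2, h12, hs⟩ := exists_pair (hQ2 y hzy)
  obtain ⟨b1', b2', h12', hs'⟩ := exists_pair (hQ2 y' hzy')
  obtain ⟨hy, ha, -⟩ := lift_inj h12 hs h12' hs' he
  exact Prod.ext hy ha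

lemma disj_Apart_Apart {P P' : Finset (Fin u → Fin (g+1))} (hP2 : ∀ x ∈ P, (supp x).card = 2)
    (hd : Disjoint P P') : Disjoint (Apart (v := v) P) (Apart (v := v) P') := by
  rw [Finset.disjoint_left]
  rintro w hw hw'
  obtain ⟨b, x, hx, rfl⟩ := mem_Apart.mp hw
  obtain ⟨b', x', hx', he⟩ := mem_Apart.mp hw'
  obtain ⟨rfl, rfl⟩ := embed_inj (hP2 x hx) he
  exact Finset.disjoint_left.mp hd hx hx'

lemma disj_Apart_Bpart {P : Finset (Fin u → Fin (g+1))} {Q : Finset (Fin v → Fin (g+1))}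
    {s : Fin u} (hQ2 : ∀ y ∈ Q, (supp y).card = 2) :
    Disjoint (Apart (v := v) P) (Bpart Q s) := by
  rw [Finset.disjoint_left]
  rintro w hw hw'
  obtain ⟨b, x, hx, rfl⟩ := mem_Apart.mp hw
  obtain ⟨y, a, hy, he⟩ := mem_Bpart.mp hw'
  obtain ⟨b1, b2, h12, hs⟩ := exists_pair (hQ2 y hy)
  have hsupp : supp (embed (u := u) b x) = {finProdFinEquiv (a, b1), finProdFinEquiv (a + s, b2)} := by
    rw [he, supp_lift h12 hs]
  rw [supp_embed] at hsupp
  have hm1 : finProdFinEquiv (a, b1) ∈ (supp x).image (fun p => finProdFinEquiv (p, b)) := by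
    rw [hsupp]; simp
  have hm2 : finProdFinEquiv (a + s, b2) ∈ (supp x).image (fun p => finProdFinEquiv (p, b)) := by
    rw [hsupp]; simp
  obtain ⟨q1, -, hq1⟩ := Finset.mem_image.mp hm1
  obtain ⟨q2, -, hq2⟩ := Finset.mem_image.mp hm2
  have e1 : b = b1 := by
    have := finProdFinEquiv.injective hq1; rw [Prod.ext_iff] at this; exact this.2
  have e2 : b = b2 := by
    have := finProdFinEquiv.injective hq2; rw [Prod.ext_iff] at this; exact this.2
  exact (ne_of_lt h12) (e1 ▸ e2)

lemma disj_Bpart_Bpart {Q Q' : Finset (Fin v → Fin (g+1))} {s s' : Fin u}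
    (hQ2 : ∀ y ∈ Q, (supp y).card = 2) (hQ'2 : ∀ y ∈ Q', (supp y).card = 2)
    (h : Disjoint Q Q' ∨ s ≠ s') : Disjoint (Bpart Q s) (Bpart Q' s') := by
  rw [Finset.disjoint_left]
  rintro w hw hw'
  obtain ⟨y, a, hy, rfl⟩ := mem_Bpart.mp hw
  obtain ⟨y', a', hy', he⟩ := mem_Bpart.mp hw'
  obtain ⟨b1, b2, h12, hs⟩ := exists_pair (hQ2 y hy)
  obtain ⟨b1', b2', h12', hs'⟩ := exists_pair (hQ'2 y' hy')
  obtain ⟨rfl, -, rfl⟩ := lift_inj h12 hs h12' hs' he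
  rcases h with hd | hss
  · exact Finset.disjoint_left.mp hd hy hy'
  · exact hss rfl

lemma dist_Apart {P : Finset (Fin u → Fin (g+1))} (hP2 : ∀ x ∈ P, (supp x).card = 2)
    (hPd : ∀ x ∈ P, ∀ x' ∈ P, x ≠ x' → 3 ≤ hammingDist x x') :
    ∀ w ∈ Apart (v := v) P, ∀ w' ∈ Apart (v := v) P, w ≠ w' → 3 ≤ hammingDist w w' := by
  intro w hw w' hw' hww
  obtain ⟨b, x, hx, rfl⟩ := mem_Apart.mp hw
  obtain ⟨b', x', hx', rfl⟩ := mem_Apart.mp hw'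
  have hw2 := card_supp_embed (v := v) (b := b) (hP2 x hx)
  have hw'2 := card_supp_embed (v := v) (b := b') (hP2 x' hx')
  by_cases hbb : b = b'
  · subst hbb
    have hxx : x ≠ x' := fun hh => hww (by rw [hh])
    obtain ⟨hne, hval⟩ := (dist3_iff (hP2 x hx) (hP2 x' hx')).mp (hPd x hx x' hx' hxx)
    refine (dist3_iff hw2 hw'2).mpr ⟨?_, ?_⟩
    · rw [supp_embed, supp_embed]
      intro him
      apply hne
      have key : ∀ (S : Finset (Fin u)) (p : Fin u),
          finProdFinEquiv (p, b) ∈ S.image (fun q => finProdFinEquiv (q, b)) ↔ p ∈ S := by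
        intro S p
        simp only [Finset.mem_image]
        constructor
        · rintro ⟨q, hq, hqe⟩
          have := finProdFinEquiv.injective hqe
          have h1 : q = p := congrArg Prod.fst this
          rwa [← h1]
        · intro hp; exact ⟨p, hp, rfl⟩
      ext p
      rw [← key (supp x) p, him, key]
    · intro k hk
      obtain ⟨p, c, rfl⟩ := pair_surj k
      rw [embed_apply, embed_apply] at hk
      rw [embed_apply]
      by_cases hc : c = b
      · subst hc
        simp only [eq_self_iff_true, if_true] at hk ⊢
        exact hval p hk
      · rw [if_neg hc]
  · apply dist3_of_disjoint_supp hw2 hw'2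
    rw [supp_embed, supp_embed, Finset.disjoint_left]
    rintro k hk hk'
    obtain ⟨q, -, rfl⟩ := Finset.mem_image.mp hk
    obtain ⟨q', -, hq'⟩ := Finset.mem_image.mp hk'
    have := finProdFinEquiv.injective hq'
    rw [Prod.ext_iff] at this
    exact hbb (this.2.symm)

lemma dist_Bpart {Q : Finset (Fin v → Fin (g+1))} {s : Fin u}
    (hQ2 : ∀ y ∈ Q, (supp y).card = 2)
    (hQd : ∀ y ∈ Q, ∀ y' ∈ Q, y ≠ y' → 3 ≤ hammingDist y y') :
    ∀ w ∈ Bpart Q s, ∀ w' ∈ Bpart Q s, w ≠ w' → 3 ≤ hammingDist w w' := by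
  intro w hw w' hw' hww
  obtain ⟨y, a, hy, rfl⟩ := mem_Bpart.mp hw
  obtain ⟨y', a', hy', rfl⟩ := mem_Bpart.mp hw'
  obtain ⟨b1, b2, h12, hs⟩ := exists_pair (hQ2 y hy)
  obtain ⟨b1', b2', h12', hs'⟩ := exists_pair (hQ2 y' hy')
  have hw2 := card_supp_lift h12 hs a s
  have hw'2 := card_supp_lift h12' hs' a' s
  by_cases hyy : y = y'
  · subst hyy
    -- same underlying word, different translate
    have haa : a ≠ a' := by
      rintro rfl
      exact hww rfl
    have hb : b1' = b1 ∧ b2' = b2 := by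
      have hpe : ({b1, b2} : Finset (Fin v)) = {b1', b2'} := by rw [← hs, hs']
      rcases pair_eq (ne_of_lt h12) hpe with ⟨e1, e2⟩ | ⟨e1, e2⟩
      · exact ⟨e1.symm, e2.symm⟩
      · rw [e1] at h12
        rw [← e2] at h12'
        exact absurd (h12.trans h12') (lt_irrefl _)
    rw [hb.1, hb.2] at hs' h12'
    apply dist3_of_disjoint_supp hw2 hw'2
    rw [supp_lift h12 hs, supp_lift h12' hs', Finset.disjoint_left]
    rintro k hk hk'
    simp only [Finset.mem_insert, Finset.mem_singleton] at hk hk'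
    have hne12 : b1 ≠ b2 := ne_of_lt h12
    rcases hk with rfl | rfl <;> rcases hk' with he | he <;>
      · have := finProdFinEquiv.injective he
        rw [Prod.ext_iff] at this
        first
        | exact haa this.1
        | exact hne12 this.2
        | exact hne12 this.2.symm
        | exact haa (add_right_cancel this.1)
  · obtain ⟨hne, hval⟩ := (dist3_iff (hQ2 y hy) (hQ2 y' hy')).mp (hQd y hy y' hy' hyy)
    refine (dist3_iff hw2 hw'2).mpr ⟨?_, ?_⟩
    · rw [supp_lift h12 hs, supp_lift h12' hs']
      intro hpp
      have hpairne : finProdFinEquiv (a, b1) ≠ finProdFinEquiv (a + s, b2) := by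
        intro he
        have h' := finProdFinEquiv.injective he
        rw [Prod.ext_iff] at h'
        exact (ne_of_lt h12) h'.2
      rcases pair_eq hpairne hpp with ⟨e1, e2⟩ | ⟨e1, e2⟩
      · have hb1 : b1 = b1' := by
          have := finProdFinEquiv.injective e1; rw [Prod.ext_iff] at this; exact this.2
        have hb2 : b2 = b2' := by
          have := finProdFinEquiv.injective e2; rw [Prod.ext_iff] at this; exact this.2
        exact hne (by rw [hs, hs', hb1, hb2])
      · have hb1 : b1 = b2' := by
          have := finProdFinEquiv.injective e1; rw [Prod.ext_iff] at this; exact this.2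
        have hb2 : b2 = b1' := by
          have := finProdFinEquiv.injective e2; rw [Prod.ext_iff] at this; exact this.2
        have hlt : b1 < b2' := h12.trans (hb2 ▸ h12')
        rw [hb1] at hlt
        exact absurd hlt (lt_irrefl _)
    · intro k hk
      obtain ⟨p, c, rfl⟩ := pair_surj k
      rw [lift_eval h12 hs, lift_eval h12' hs'] at hk
      rw [lift_eval h12 hs]
      by_cases h1 : c = b1 ∧ p = a
      · rw [if_pos h1] at hk ⊢
        by_cases h1' : c = b1' ∧ p = a'
        · rw [if_pos h1'] at hk
          apply hval
          rw [hk, ← h1.1, h1'.1]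
        · rw [if_neg h1'] at hk
          by_cases h2' : c = b2' ∧ p = a' + s
          · rw [if_pos h2'] at hk
            apply hval
            rw [hk, ← h1.1, h2'.1]
          · rwa [if_neg h2'] at hk
      · rw [if_neg h1] at hk ⊢
        by_cases h2 : c = b2 ∧ p = a + s
        · rw [if_pos h2] at hk ⊢
          by_cases h1' : c = b1' ∧ p = a'
          · rw [if_pos h1'] at hk
            apply hval
            rw [hk, ← h2.1, h1'.1]
          · rw [if_neg h1'] at hk
            by_cases h2' : c = b2' ∧ p = a' + s
            · rw [if_pos h2'] at hk
              apply hval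
              rw [hk, ← h2.1, h2'.1]
            · rwa [if_neg h2'] at hk
        · rw [if_neg h2]

lemma cover_lift {w : Fin (u*v) → Fin (g+1)} {p1 p2 : Fin u} {b1 b2 : Fin v} (h12 : b1 < b2)
    (hsw : supp w = {finProdFinEquiv (p1, b1), finProdFinEquiv (p2, b2)}) :
    ∃ (y : Fin v → Fin (g+1)) (a s : Fin u), (supp y).card = 2 ∧ w = lift y a s := by
  have hne : b1 ≠ b2 := ne_of_lt h12
  have hv1 : w (finProdFinEquiv (p1, b1)) ≠ 0 := mem_supp.mp (by rw [hsw]; simp)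
  have hv2 : w (finProdFinEquiv (p2, b2)) ≠ 0 := mem_supp.mp (by rw [hsw]; simp)
  set y : Fin v → Fin (g+1) := fun b =>
    if b = b1 then w (finProdFinEquiv (p1, b1))
    else if b = b2 then w (finProdFinEquiv (p2, b2)) else 0 with hy
  have hsy : supp y = {b1, b2} := by
    ext b
    rw [mem_supp]
    by_cases hb : b = b1
    · subst hb; simp [hy, hv1]
    · by_cases hb2 : b = b2
      · subst hb2; simp [hy, hb, hv2]
      · simp [hy, hb, hb2]
  have hcard : (supp y).card = 2 := by
    rw [hsy, Finset.card_insert_of_notMem (by simpa using hne), Finset.card_singleton]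
  refine ⟨y, p1, p2 - p1, hcard, ?_⟩
  funext k
  obtain ⟨p, c, rfl⟩ := pair_surj k
  rw [lift_eval h12 hsy]
  have hps : p1 + (p2 - p1) = p2 := add_sub_cancel _ _
  rw [hps]
  by_cases h1 : c = b1 ∧ p = p1
  · rw [if_pos h1, h1.1, h1.2]
    simp [hy]
  · rw [if_neg h1]
    by_cases h2 : c = b2 ∧ p = p2
    · rw [if_pos h2, h2.1, h2.2]
      simp [hy, Ne.symm hne]
    · rw [if_neg h2]
      by_contra h0
      have hmem : finProdFinEquiv (p, c) ∈ supp w := mem_supp.mpr h0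
      rw [hsw] at hmem
      simp only [Finset.mem_insert, Finset.mem_singleton,
        EmbeddingLike.apply_eq_iff_eq, Prod.mk.injEq] at hmem
      rcases hmem with ⟨hp, hc⟩ | ⟨hp, hc⟩
      · exact h1 ⟨hc, hp⟩
      · exact h2 ⟨hc, hp⟩

lemma cover {w : Fin (u*v) → Fin (g+1)} (hw : (supp w).card = 2) :
    (∃ (b : Fin v) (x : Fin u → Fin (g+1)), (supp x).card = 2 ∧ w = embed b x) ∨
    (∃ (y : Fin v → Fin (g+1)) (a s : Fin u), (supp y).card = 2 ∧ w = lift y a s) := by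
  obtain ⟨k1, k2, hk12, hsw⟩ := Finset.card_eq_two.mp hw
  obtain ⟨q1, c1, rfl⟩ := pair_surj k1
  obtain ⟨q2, c2, rfl⟩ := pair_surj k2
  rcases lt_trichotomy c1 c2 with hc | hc | hc
  · exact Or.inr (cover_lift hc hsw)
  · -- same column : embed case
    subst hc
    have hqq : q1 ≠ q2 := by
      intro hh
      exact hk12 (by rw [hh])
    left
    set x : Fin u → Fin (g+1) := fun p => w (finProdFinEquiv (p, c1)) with hx
    have hsx : supp x = {q1, q2} := by
      ext p
      rw [mem_supp]
      constructor
      · intro h0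
        have hmem : finProdFinEquiv (p, c1) ∈ supp w := mem_supp.mpr h0
        rw [hsw] at hmem
        simp only [Finset.mem_insert, Finset.mem_singleton,
          EmbeddingLike.apply_eq_iff_eq, Prod.mk.injEq] at hmem
        simp only [Finset.mem_insert, Finset.mem_singleton]
        rcases hmem with ⟨hp, -⟩ | ⟨hp, -⟩
        · exact Or.inl hp
        · exact Or.inr hp
      · intro hp
        have hmem : finProdFinEquiv (p, c1) ∈ supp w := by
          rw [hsw]
          simp only [Finset.mem_insert, Finset.mem_singleton] at hp ⊢
          rcases hp with rfl | rfl
          · left; rfl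
          · right; rfl
        have h0 : w (finProdFinEquiv (p, c1)) ≠ 0 := mem_supp.mp hmem
        exact h0
    refine ⟨c1, x, ?_, ?_⟩
    · rw [hsx, Finset.card_insert_of_notMem (by simpa using hqq), Finset.card_singleton]
    · funext k
      obtain ⟨p, c, rfl⟩ := pair_surj k
      rw [embed_apply]
      by_cases hc : c = c1
      · rw [if_pos hc, hx, hc]
      · rw [if_neg hc]
        by_contra h0
        have hmem : finProdFinEquiv (p, c) ∈ supp w := mem_supp.mpr h0
        rw [hsw] at hmem
        simp only [Finset.mem_insert, Finset.mem_singleton,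
          EmbeddingLike.apply_eq_iff_eq, Prod.mk.injEq] at hmem
        rcases hmem with ⟨-, hcc⟩ | ⟨-, hcc⟩ <;> exact hc hcc
  · exact Or.inr (cover_lift hc (hsw.trans (Finset.pair_comm _ _)))

end Parts

end OFProd

/-- Product construction: if `g·u` and `g·v` are even, `u > g`, `v > g`, and
both an `OF(u,g)` and an `OF(v,g)` exist, then an `OF(u·v,g)` exists. -/
theorem OF_product (u v g : ℕ) (hg : 1 ≤ g) (hu : 1 ≤ u) (hv : 1 ≤ v)
    (hgu : Even (g * u)) (hgv : Even (g * v)) (hug : g < u) (hvg : g < v)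
    (hOFu : IsOF u g) (hOFv : IsOF v g) : IsOF (u * v) g := by
  haveI : NeZero u := ⟨by omega⟩
  obtain ⟨P, hPdisj, hPun, hPcard, hPdist⟩ := hOFu
  obtain ⟨Q, hQdisj, hQun, hQcard, hQdist⟩ := hOFv
  have hP2 : ∀ i, ∀ x ∈ P i, (OFProd.supp x).card = 2 := by
    intro i x hx
    have hxw : x ∈ weightTwoWords u g := by
      rw [← hPun]; exact Finset.mem_biUnion.mpr ⟨i, Finset.mem_univ i, hx⟩
    exact OFProd.mem_weightTwoWords.mp hxw
  have hQ2 : ∀ j, ∀ y ∈ Q j, (OFProd.supp y).card = 2 := by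
    intro j y hy
    have hyw : y ∈ weightTwoWords v g := by
      rw [← hQun]; exact Finset.mem_biUnion.mpr ⟨j, Finset.mem_univ j, hy⟩
    exact OFProd.mem_weightTwoWords.mp hyw
  -- arithmetic facts
  have hN : g * (u * v - 1) = g * (u - 1) + g * (v - 1) * u := by
    obtain ⟨u', rfl⟩ : ∃ u', u = u' + 1 := ⟨u - 1, by omega⟩
    obtain ⟨v', rfl⟩ : ∃ v', v = v' + 1 := ⟨v - 1, by omega⟩
    have h2 : (u' + 1) * (v' + 1) = u' + v' * (u' + 1) + 1 := by ring
    rw [h2, Nat.add_sub_cancel]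
    simp only [Nat.add_sub_cancel]
    ring
  obtain ⟨t, ht⟩ := hgu
  obtain ⟨r, hr⟩ := hgv
  have hsA : v * (g * u / 2) = g * (u * v) / 2 := by
    have e1 : g * u / 2 = t := by
      rw [ht, ← two_mul t, Nat.mul_div_cancel_left t (by norm_num : 0 < 2)]
    have e2 : g * (u * v) = 2 * (t * v) := by
      rw [← mul_assoc, ht]; ring
    rw [e1, e2, Nat.mul_div_cancel_left _ (by norm_num : 0 < 2), mul_comm]
  have hsB : g * v / 2 * u = g * (u * v) / 2 := by
    have e1 : g * v / 2 = r := by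
      rw [hr, ← two_mul r, Nat.mul_div_cancel_left r (by norm_num : 0 < 2)]
    have e2 : g * (u * v) = 2 * (r * u) := by
      rw [show g * (u * v) = g * v * u by ring, hr]; ring
    rw [e1, e2, Nat.mul_div_cancel_left _ (by norm_num : 0 < 2)]
  -- the indexed family
  let F : (Fin (g * (u - 1)) ⊕ Fin (g * (v - 1)) × Fin u) → Finset (Fin (u * v) → Fin (g + 1)) :=
    Sum.elim (fun i => OFProd.Apart (v := v) (P i)) fun js => OFProd.Bpart (Q js.1) js.2
  have hFl : ∀ i, F (Sum.inl i) = OFProd.Apart (v := v) (P i) := fun i => rfl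
  have hFr : ∀ j s, F (Sum.inr (j, s)) = OFProd.Bpart (Q j) s := fun j s => rfl
  have hFdisj : ∀ c d, c ≠ d → Disjoint (F c) (F d) := by
    rintro (i | ⟨j, s⟩) (i' | ⟨j', s'⟩) hcd
    · rw [hFl, hFl]
      exact OFProd.disj_Apart_Apart (hP2 i) (hPdisj i i' (fun h => hcd (by rw [h])))
    · rw [hFl, hFr]
      exact OFProd.disj_Apart_Bpart (hQ2 j')
    · rw [hFr, hFl]
      exact (OFProd.disj_Apart_Bpart (hQ2 j)).symm
    · rw [hFr, hFr]
      apply OFProd.disj_Bpart_Bpart (hQ2 j) (hQ2 j')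
      by_cases hjj : j = j'
      · subst hjj
        exact Or.inr (fun hss => hcd (by rw [hss]))
      · exact Or.inl (hQdisj j j' hjj)
  have hFcard : ∀ c, (F c).card = g * (u * v) / 2 := by
    rintro (i | ⟨j, s⟩)
    · rw [hFl, OFProd.card_Apart (hP2 i), hPcard i, hsA]
    · rw [hFr, OFProd.card_Bpart (hQ2 j) s, hQcard j, hsB]
  have hFdist : ∀ c, ∀ w ∈ F c, ∀ w' ∈ F c, w ≠ w' → 3 ≤ hammingDist w w' := by
    rintro (i | ⟨j, s⟩)
    · rw [hFl]
      exact OFProd.dist_Apart (hP2 i) (hPdist i)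
    · rw [hFr]
      exact OFProd.dist_Bpart (hQ2 j) (hQdist j)
  let eκ : Fin (g * (u * v - 1)) ≃ (Fin (g * (u - 1)) ⊕ Fin (g * (v - 1)) × Fin u) :=
    (finCongr hN).trans (finSumFinEquiv.symm.trans
      (Equiv.sumCongr (Equiv.refl _) finProdFinEquiv.symm))
  refine ⟨fun k => F (eκ k), ?_, ?_, ?_, ?_⟩
  · intro i j hij
    exact hFdisj _ _ (fun h => hij (eκ.injective h))
  · have hsurj : Finset.univ.biUnion (fun k => F (eκ k)) = Finset.univ.biUnion F := by
      apply Finset.Subset.antisymm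
      · intro w hw
        rw [Finset.mem_biUnion] at hw ⊢
        obtain ⟨k, -, hk⟩ := hw
        exact ⟨eκ k, Finset.mem_univ _, hk⟩
      · intro w hw
        rw [Finset.mem_biUnion] at hw ⊢
        obtain ⟨c, -, hc⟩ := hw
        exact ⟨eκ.symm c, Finset.mem_univ _, by simpa using hc⟩
    rw [hsurj]
    apply Finset.Subset.antisymm
    · intro w hw
      rw [Finset.mem_biUnion] at hw
      obtain ⟨c, -, hc⟩ := hw
      rw [OFProd.mem_weightTwoWords]
      rcases c with i | ⟨j, s⟩
      · rw [hFl] at hc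
        obtain ⟨b, x, hx, rfl⟩ := OFProd.mem_Apart.mp hc
        exact OFProd.card_supp_embed (hP2 i x hx)
      · rw [hFr] at hc
        obtain ⟨y, a, hy, rfl⟩ := OFProd.mem_Bpart.mp hc
        obtain ⟨b1, b2, h12, hs⟩ := OFProd.exists_pair (hQ2 j y hy)
        exact OFProd.card_supp_lift h12 hs a s
    · intro w hw
      have hw2 := OFProd.mem_weightTwoWords.mp hw
      rw [Finset.mem_biUnion]
      rcases OFProd.cover hw2 with ⟨b, x, hx2, rfl⟩ | ⟨y, a, s, hy2, rfl⟩
      · have hxH : x ∈ weightTwoWords u g := OFProd.mem_weightTwoWords.mpr hx2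
        rw [← hPun] at hxH
        obtain ⟨i, -, hxP⟩ := Finset.mem_biUnion.mp hxH
        exact ⟨Sum.inl i, Finset.mem_univ _,
          (hFl i) ▸ OFProd.mem_Apart.mpr ⟨b, x, hxP, rfl⟩⟩
      · have hyH : y ∈ weightTwoWords v g := OFProd.mem_weightTwoWords.mpr hy2
        rw [← hQun] at hyH
        obtain ⟨j, -, hyQ⟩ := Finset.mem_biUnion.mp hyH
        exact ⟨Sum.inr (j, s), Finset.mem_univ _,
          (hFr j s) ▸ OFProd.mem_Bpart.mpr ⟨y, a, hyQ, rfl⟩⟩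
  · intro k
    exact hFcard (eκ k)
  · intro k
    exact hFdist (eκ k)
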